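/- If the hyper-parameters Δ₁, Δ₂, ϑ₁, ϑ₂, ζ₁, ζ₂ in the kernelized formulation are all set to zero, and both kernels are the Kronecker delta kernel on finite sets {x₁,…,x_m} and {y₁,…,y_n} with distinct points (so G₁ = I_m, G₂ = I_n), then the formulation reduces exactly to the discrete optimal transport linear program: minimize tr(αCᵀ) over α ∈ ℝ^{m×n} with α ≥ 0, α𝟏 = (1/m)𝟏, αᵀ𝟏 = (1/n)𝟏. -/

import Mathlib

open Matrix

lemma hadamard_one_one (k : ℕ) :
    Matrix.hadamard (1 : Matrix (Fin k) (Fin k) ℝ) 1 = 1 := by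
  ext i j
  by_cases h : i = j <;> simp [Matrix.hadamard_apply, Matrix.one_apply, h]

lemma dot_self_nonneg {k : ℕ} (v : Fin k → ℝ) : 0 ≤ v ⬝ᵥ v := by
  apply Finset.sum_nonneg
  intro i _
  exact mul_self_nonneg _

/-- When both kernels are Kronecker delta kernels vn distinct points (so the Gram
matrices are identities) and all regularization thresholds are set to zero, the
feasible set of the kernelized formulation (6) coincides exactly with the feasible
set of the discrete optimal transport linear program:
`α ≥ 0`, `α𝟏 = (1/m)𝟏`, `αᵀ𝟏 = (1/n)𝟏` (the objective `tr(αCᵀ)` is identical). -/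
theorem kronecker_delta_reduces_to_discrete_OT
    (m n : ℕ) (hm : 0 < m) (hn : 0 < n)
    (G₁ : Matrix (Fin m) (Fin m) ℝ) (G₂ : Matrix (Fin n) (Fin n) ℝ)
    (hG₁ : G₁ = 1) (hG₂ : G₂ = 1)
    (α : Matrix (Fin m) (Fin n) ℝ) :
    (let vm : Fin m → ℝ := fun _ => 1
     let vn : Fin n → ℝ := fun _ => 1
     (∀ i j, 0 ≤ α i j) ∧ (∑ i, ∑ j, α i j) = 1 ∧
       ∃ (β : Matrix (Fin n) (Fin m) ℝ) (γ : Matrix (Fin m) (Fin n) ℝ),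
         -- constraint with threshold Δ₁ = 0
         (1 / (m : ℝ) ^ 2) * ((G₁ *ᵥ vm) ⬝ᵥ ((βᵀ * G₂ * β) *ᵥ (G₁ *ᵥ vm))) -
             (2 / ((m : ℝ) * (n : ℝ))) * (vn ⬝ᵥ ((G₂ * β) *ᵥ (G₁ *ᵥ vm))) +
             (1 / (n : ℝ) ^ 2) * (vn ⬝ᵥ (G₂ *ᵥ vn)) ≤ 0 ∧
         -- constraint with threshold Δ₂ = 0
         (1 / (n : ℝ) ^ 2) * ((G₂ *ᵥ vn) ⬝ᵥ ((γᵀ * G₁ * γ) *ᵥ (G₂ *ᵥ vn))) -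
             (2 / ((m : ℝ) * (n : ℝ))) * (vm ⬝ᵥ ((G₁ * γ) *ᵥ (G₂ *ᵥ vn))) +
             (1 / (m : ℝ) ^ 2) * (vm ⬝ᵥ (G₁ *ᵥ vm)) ≤ 0 ∧
         -- coupling constraint with threshold ϑ₁ = 0
         ((G₁ * α - (1 / (m : ℝ)) • (G₁ * G₁ * βᵀ))ᵀ *
             (α * G₂ - (1 / (m : ℝ)) • (G₁ * βᵀ * G₂))).trace ≤ 0 ∧
         -- coupling constraint with threshold ϑ₂ = 0
         ((α * G₂ - (1 / (n : ℝ)) • (γ * G₂ * G₂))ᵀ *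
             (G₁ * α - (1 / (n : ℝ)) • (G₁ * γ * G₂))).trace ≤ 0 ∧
         -- marginal constraint with threshold ζ₁ = 0
         ((α *ᵥ vn - (1 / (m : ℝ)) • vm) ⬝ᵥ
             ((Matrix.hadamard G₁ G₁) *ᵥ (α *ᵥ vn - (1 / (m : ℝ)) • vm))) ≤ 0 ∧
         -- marginal constraint with threshold ζ₂ = 0
         ((αᵀ *ᵥ vm - (1 / (n : ℝ)) • vn) ⬝ᵥ
             ((Matrix.hadamard G₂ G₂) *ᵥ (αᵀ *ᵥ vm - (1 / (n : ℝ)) • vn))) ≤ 0) ↔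
      ((∀ i j, 0 ≤ α i j) ∧ (∀ i, ∑ j, α i j = 1 / (m : ℝ)) ∧
        (∀ j, ∑ i, α i j = 1 / (n : ℝ))) := by
  subst hG₁ hG₂
  have hm' : (m : ℝ) ≠ 0 := Nat.cast_ne_zero.mpr hm.ne'
  have hn' : (n : ℝ) ≠ 0 := Nat.cast_ne_zero.mpr hn.ne'
  dsimp only
  set vm : Fin m → ℝ := fun _ => 1 with hvm
  set vn : Fin n → ℝ := fun _ => 1 with hvn
  constructor
  · rintro ⟨hpos, hsum, β, γ, _, _, _, _, hζ₁, hζ₂⟩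
    rw [hadamard_one_one, one_mulVec] at hζ₁ hζ₂
    have h1 : (α *ᵥ vn - (1 / (m : ℝ)) • vm) = 0 :=
      dotProduct_self_eq_zero.mp (le_antisymm hζ₁ (dot_self_nonneg _))
    have h2 : (αᵀ *ᵥ vm - (1 / (n : ℝ)) • vn) = 0 :=
      dotProduct_self_eq_zero.mp (le_antisymm hζ₂ (dot_self_nonneg _))
    refine ⟨hpos, ?_, ?_⟩
    · intro i
      have := congrFun h1 i
      simpa [mulVec, dotProduct, vm, vn, sub_eq_zero] using this
    · intro j
      have := congrFun h2 j
      simpa [mulVec, dotProduct, vm, vn, sub_eq_zero] using this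
  · rintro ⟨hpos, hrow, hcol⟩
    have hα1 : α *ᵥ vn = (1 / (m : ℝ)) • vm := by
      funext i; simpa [mulVec, dotProduct, vm, vn] using hrow i
    have hα2 : αᵀ *ᵥ vm = (1 / (n : ℝ)) • vn := by
      funext j; simpa [mulVec, dotProduct, vm, vn, Matrix.transpose_apply] using hcol j
    refine ⟨hpos, ?_, (m : ℝ) • αᵀ, (n : ℝ) • α, ?_, ?_, ?_, ?_, ?_, ?_⟩
    · calc (∑ i, ∑ j, α i j) = ∑ i : Fin m, (1 / (m : ℝ)) := by
            exact Finset.sum_congr rfl fun i _ => hrow i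
        _ = 1 := by simp [Finset.sum_const]; field_simp
    · -- Δ₁ constraint with β = m • αᵀ
      simp only [one_mulVec, Matrix.mul_one, Matrix.one_mul, ← mulVec_mulVec]
      have hβvm : ((m : ℝ) • αᵀ) *ᵥ vm = ((m : ℝ) / (n : ℝ)) • vn := by
        rw [smul_mulVec, hα2, smul_smul]
        congr 1; field_simp
      rw [hβvm, Matrix.transpose_smul, Matrix.transpose_transpose]
      have hrest : ((m : ℝ) • α) *ᵥ (((m : ℝ) / (n : ℝ)) • vn)
          = ((m : ℝ) / (n : ℝ)) • vm := by
        rw [mulVec_smul, smul_mulVec, hα1, smul_smul, smul_smul]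
        congr 1; field_simp
      rw [hrest]
      apply le_of_eq
      simp [dotProduct, vm, vn, Finset.sum_const, smul_eq_mul, mul_comm]
      field_simp
      ring
    · -- Δ₂ constraint with γ = n • α
      simp only [one_mulVec, Matrix.mul_one, Matrix.one_mul, ← mulVec_mulVec]
      have hγvn : ((n : ℝ) • α) *ᵥ vn = ((n : ℝ) / (m : ℝ)) • vm := by
        rw [smul_mulVec, hα1, smul_smul]
        congr 1; field_simp
      rw [hγvn, Matrix.transpose_smul]
      have hrest : ((n : ℝ) • αᵀ) *ᵥ (((n : ℝ) / (m : ℝ)) • vm)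
          = ((n : ℝ) / (m : ℝ)) • vn := by
        rw [mulVec_smul, smul_mulVec, hα2, smul_smul, smul_smul]
        congr 1; field_simp
      rw [hrest]
      apply le_of_eq
      simp [dotProduct, vm, vn, Finset.sum_const, smul_eq_mul, mul_comm]
      field_simp
      ring
    · -- coupling constraint 1
      have hβT : (((m : ℝ) • αᵀ)ᵀ : Matrix (Fin m) (Fin n) ℝ) = (m : ℝ) • α := by
        rw [Matrix.transpose_smul, Matrix.transpose_transpose]
      have hz : α - (1 / (m : ℝ)) • ((m : ℝ) • α) = 0 := by
        rw [smul_smul]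
        have : (1 / (m : ℝ)) * m = 1 := by field_simp
        rw [this, one_smul, sub_self]
      simp only [Matrix.one_mul, Matrix.mul_one, hβT, hz]
      simp
    · -- coupling constraint 2
      have hz : α - (1 / (n : ℝ)) • ((n : ℝ) • α) = 0 := by
        rw [smul_smul]
        have : (1 / (n : ℝ)) * n = 1 := by field_simp
        rw [this, one_smul, sub_self]
      simp only [Matrix.one_mul, Matrix.mul_one, hz]
      simp
    · rw [hadamard_one_one, one_mulVec, hα1, sub_self]
      simp
    · rw [hadamard_one_one, one_mulVec, hα2, sub_self]
      simp
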